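/- The function f is strictly increasing on the interval [0, 2): for all real V₁, V₂ with 0 ≤ V₁ < V₂ < 2, f(V₁) < f(V₂). -/

import Mathlib

open Real

/-- First branch of Gupta et al.'s helper function `f`. -/
noncomputable def g1 (V : ℝ) : ℝ := Real.log ((2 + V) / (2 - V)) - 2 * V / (2 + V)

/-- Gupta et al.'s helper function `f`. -/
noncomputable def f (V : ℝ) : ℝ := max (g1 V) (V ^ 2 / 2 + V ^ 4 / 36 + V ^ 6 / 288)

noncomputable def G (V : ℝ) : ℝ := Real.log (2 + V) - Real.log (2 - V) - 2 * V / (2 + V)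

lemma G_hasDerivAt {x : ℝ} (h1 : -2 < x) (h2 : x < 2) :
    HasDerivAt G (1 / (2 + x) + 1 / (2 - x) - 4 / (2 + x) ^ 2) x := by
  have hp : (2 : ℝ) + x ≠ 0 := by linarith
  have hm : (2 : ℝ) - x ≠ 0 := by linarith
  have d1 : HasDerivAt (fun x : ℝ => Real.log (2 + x)) (1 / (2 + x)) x := by
    have : HasDerivAt (fun x : ℝ => 2 + x) 1 x := by
      simpa using (hasDerivAt_id x).const_add 2
    simpa using this.log hp
  have d2 : HasDerivAt (fun x : ℝ => Real.log (2 - x)) (-1 / (2 - x)) x := by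
    have : HasDerivAt (fun x : ℝ => 2 - x) (-1) x := by
      exact (hasDerivAt_id x).const_sub 2
    simpa using this.log hm
  have d3 : HasDerivAt (fun x : ℝ => 2 * x / (2 + x)) (4 / (2 + x) ^ 2) x := by
    have hn : HasDerivAt (fun x : ℝ => 2 * x) 2 x := by
      simpa using (hasDerivAt_id x).const_mul 2
    have hd : HasDerivAt (fun x : ℝ => 2 + x) 1 x := by
      simpa using (hasDerivAt_id x).const_add 2
    have := hn.div hd hp
    refine this.congr_deriv ?_
    ring
  have := (d1.sub d2).sub d3
  refine this.congr_deriv ?_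
  ring

lemma G_strictMonoOn : StrictMonoOn G (Set.Ico (0:ℝ) 2) := by
  have hconv : Convex ℝ (Set.Ico (0:ℝ) 2) := convex_Ico 0 2
  apply StrictMonoOn.mono (s := Set.Ico (0:ℝ) 2) ?_ (le_refl _)
  apply strictMonoOn_of_deriv_pos hconv
  · apply ContinuousOn.sub
    apply ContinuousOn.sub
    · apply ContinuousOn.log (by fun_prop)
      intro x hx; simp only [Set.mem_Ico] at hx; intro h; linarith [hx.1]
    · apply ContinuousOn.log (by fun_prop)
      intro x hx; simp only [Set.mem_Ico] at hx; intro h; linarith [hx.2]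
    · apply ContinuousOn.div (by fun_prop) (by fun_prop)
      intro x hx; simp only [Set.mem_Ico] at hx; intro h; linarith [hx.1]
  · intro x hx
    rw [interior_Ico] at hx
    obtain ⟨hx0, hx2⟩ := hx
    rw [(G_hasDerivAt (by linarith) hx2).deriv]
    have hp : (0:ℝ) < 2 + x := by linarith
    have hm : (0:ℝ) < 2 - x := by linarith
    rw [div_add_div _ _ (ne_of_gt hp) (ne_of_gt hm), sub_pos, div_lt_div_iff₀ (by positivity) (by positivity)]
    nlinarith

lemma g1_eq (x : ℝ) (h1 : -2 < x) (h2 : x < 2) : g1 x = G x := by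
  unfold g1 G
  rw [Real.log_div (by linarith) (by linarith)]

theorem f_strictMonoOn :
    ∀ V₁ V₂ : ℝ, 0 ≤ V₁ → V₁ < V₂ → V₂ < 2 → f V₁ < f V₂ := by
  intro V₁ V₂ h0 h12 h22
  have hg : g1 V₁ < g1 V₂ := by
    rw [g1_eq V₁ (by linarith) (by linarith), g1_eq V₂ (by linarith) (by linarith)]
    exact G_strictMonoOn ⟨h0, by linarith⟩ ⟨by linarith, h22⟩ h12
  have hp : V₁ ^ 2 / 2 + V₁ ^ 4 / 36 + V₁ ^ 6 / 288 <
      V₂ ^ 2 / 2 + V₂ ^ 4 / 36 + V₂ ^ 6 / 288 := by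
    have h2 : V₁ ^ 2 < V₂ ^ 2 := pow_lt_pow_left₀ h12 h0 (by norm_num)
    have h4 : V₁ ^ 4 < V₂ ^ 4 := pow_lt_pow_left₀ h12 h0 (by norm_num)
    have h6 : V₁ ^ 6 < V₂ ^ 6 := pow_lt_pow_left₀ h12 h0 (by norm_num)
    linarith
  exact max_lt_max hg hp
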